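/- Let K̂̂ denote the switching policy (S−N, S−N+1, …, S−1, S). Then for every switching policy K one has W_q(K) ≤ W_q(K̂̂), F(K̂̂) ≤ F(K), and B(K) ≤ B(K̂̂); that is, K̂̂ yields the largest possible expected waiting time and expected back-room staffing and the smallest possible expected front-room staffing among all policies. In particular, for a given real B_l, if B(K̂̂) < B_l then there exists no switching policy K with B(K) ≥ B_l. -/

import Mathlib

open Finset

/-- A switching policy: `k 0 ≥ 0`, `k i - k (i-1) ≥ 1` for `1 ≤ i ≤ N`, and `k N = S`. -/
def IsPolicy (N : ℕ) (S : ℤ) (k : ℕ → ℤ) : Prop :=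
  0 ≤ k 0 ∧ (∀ i : ℕ, 1 ≤ i → i ≤ N → 1 ≤ k i - k (i - 1)) ∧ k N = S

/-- `X_i = ∏_{g=1}^{i-1} (1/g)^(k_g - k_{g-1})`. -/
noncomputable def Xcoef (k : ℕ → ℤ) (i : ℕ) : ℝ :=
  ∏ g ∈ Finset.Icc 1 (i - 1), ((1 : ℝ) / (g : ℝ)) ^ (k g - k (g - 1))

/-- `β (k 0) = 1` and, for `1 ≤ i ≤ N` and `k (i-1) + 1 ≤ j ≤ k i`,
`β j = (λ/μ)^(j - k 0) * (1/i)^(j - k (i-1)) * X_i`. -/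
def IsBeta (lam mu : ℝ) (N : ℕ) (k : ℕ → ℤ) (β : ℤ → ℝ) : Prop :=
  β (k 0) = 1 ∧
  ∀ i : ℕ, 1 ≤ i → i ≤ N → ∀ j : ℤ, k (i - 1) + 1 ≤ j → j ≤ k i →
    β j = (lam / mu) ^ (j - k 0) * ((1 : ℝ) / (i : ℝ)) ^ (j - k (i - 1)) * Xcoef k i

/-- Steady-state probabilities `P j = β j / Σ_{m=k 0}^{S} β m`. -/
noncomputable def Pfun (S : ℤ) (k : ℕ → ℤ) (β : ℤ → ℝ) (j : ℤ) : ℝ :=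
  β j / ∑ m ∈ Finset.Icc (k 0) S, β m

/-- Expected number of front-room workers. -/
noncomputable def Fval (N : ℕ) (S : ℤ) (k : ℕ → ℤ) (β : ℤ → ℝ) : ℝ :=
  ∑ i ∈ Finset.Icc 1 N, ∑ j ∈ Finset.Icc (k (i - 1) + 1) (k i), (i : ℝ) * Pfun S k β j

/-- Expected number of back-room workers. -/
noncomputable def Bval (N : ℕ) (S : ℤ) (k : ℕ → ℤ) (β : ℤ → ℝ) : ℝ :=
  (N : ℝ) - Fval N S k β

/-- Expected number of customers in the front room. -/
noncomputable def Lval (S : ℤ) (k : ℕ → ℤ) (β : ℤ → ℝ) : ℝ :=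
  ∑ j ∈ Finset.Icc (k 0) S, (j : ℝ) * Pfun S k β j

/-- Expected waiting time `W_q = L / (λ (1 - P S)) - 1/μ`. -/
noncomputable def Wq (lam mu : ℝ) (S : ℤ) (k : ℕ → ℤ) (β : ℤ → ℝ) : ℝ :=
  Lval S k β / (lam * (1 - Pfun S k β S)) - 1 / mu

/-- The policy `K̂̂ = (S-N, S-N+1, …, S-1, S)`. -/
def khathat (N : ℕ) (S : ℤ) : ℕ → ℤ := fun i => S - N + i

lemma sum_Ioc_consec (f : ℤ → ℝ) {a b c : ℤ} (h1 : a ≤ b) (h2 : b ≤ c) :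
    ∑ i ∈ Ioc a b, f i + ∑ i ∈ Ioc b c, f i = ∑ i ∈ Ioc a c, f i := by
  rw [← Finset.sum_union (by rw [Finset.disjoint_left]; intro x hx hx'; simp at hx hx'; omega)]
  congr 1; ext x; simp; omega

section policy
variable {lam mu : ℝ} {N : ℕ} {S : ℤ} {k : ℕ → ℤ} {β : ℤ → ℝ}

lemma policy_mono (hk : IsPolicy N S k) : ∀ i, i ≤ N → k 0 + i ≤ k i := by
  intro i hi
  induction i with
  | zero => simp
  | succ n ih =>
    have h1 := hk.2.1 (n+1) (by omega) hi
    have h2 := ih (by omega)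
    simp only [Nat.add_sub_cancel] at h1
    push_cast
    push_cast at h2
    omega

lemma policy_upper (hk : IsPolicy N S k) : ∀ d i : ℕ, i + d = N → k i + d ≤ S := by
  intro d
  induction d with
  | zero => intro i h; have : i = N := by omega
            subst this; simp [hk.2.2]
  | succ d ih =>
    intro i h
    have h1 := hk.2.1 (i+1) (by omega) (by omega)
    have h2 := ih (i+1) (by omega)
    simp only [Nat.add_sub_cancel] at h1
    push_cast at h2 ⊢
    omega

lemma policy_upper' (hk : IsPolicy N S k) {i : ℕ} (hi : i ≤ N) : k i ≤ S - N + i := by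
  have := policy_upper hk (N - i) i (by omega)
  push_cast at this ⊢
  omega

lemma policy_cover (hk : IsPolicy N S k) :
    ∀ i : ℕ, i ≤ N → ∀ j : ℤ, k 0 < j → j ≤ k i →
      ∃ t : ℕ, 1 ≤ t ∧ t ≤ i ∧ k (t-1) < j ∧ j ≤ k t := by
  intro i hi
  induction i with
  | zero => intro j h1 h2; omega
  | succ n ih =>
    intro j h1 h2
    by_cases hc : j ≤ k n
    · obtain ⟨t, ht1, ht2, ht3, ht4⟩ := ih (by omega) j h1 hc
      exact ⟨t, ht1, by omega, ht3, ht4⟩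
    · push_neg at hc
      exact ⟨n+1, by omega, le_rfl, by simpa using hc, h2⟩

lemma Xcoef_pos (i : ℕ) : 0 < Xcoef k i := by
  apply Finset.prod_pos
  intro g hg
  simp only [Finset.mem_Icc] at hg
  have hg0 : (0:ℝ) < (g:ℝ) := by exact_mod_cast Nat.lt_of_lt_of_le Nat.zero_lt_one hg.1
  apply zpow_pos
  positivity

lemma Xcoef_succ {i : ℕ} (hi : 1 ≤ i) :
    Xcoef k (i+1) = Xcoef k i * ((1:ℝ)/(i:ℝ)) ^ (k i - k (i-1)) := by
  obtain ⟨i', rfl⟩ : ∃ i', i = i'+1 := ⟨i-1, by omega⟩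
  unfold Xcoef
  simp only [Nat.add_sub_cancel]
  rw [Finset.prod_Icc_succ_top (by omega)]
  simp

end policy

section step
variable {lam mu : ℝ} {N : ℕ} {S : ℤ} {k : ℕ → ℤ} {β : ℤ → ℝ}

lemma beta_step (hlam : 0 < lam) (hmu : 0 < mu) (hk : IsPolicy N S k)
    (hβ : IsBeta lam mu N k β) :
    ∀ i : ℕ, 1 ≤ i → i ≤ N → ∀ j : ℤ, k (i-1) < j → j ≤ k i →
      (i:ℝ) * β j = (lam/mu) * β (j-1) := by
  intro i hi1 hiN j hj1 hj2
  have hρ : (0:ℝ) < lam/mu := div_pos hlam hmu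
  have hρ0 : (lam/mu) ≠ 0 := ne_of_gt hρ
  have hi0 : (0:ℝ) < (i:ℝ) := by exact_mod_cast Nat.lt_of_lt_of_le Nat.zero_lt_one hi1
  have hione : ((1:ℝ)/(i:ℝ)) ≠ 0 := by positivity
  have hbj := hβ.2 i hi1 hiN j (by omega) hj2
  by_cases hcase : k (i-1) + 1 < j
  · have hbj' := hβ.2 i hi1 hiN (j-1) (by omega) (by omega)
    have e1 : (lam/mu) ^ (j - k 0) = (lam/mu) ^ (j - 1 - k 0) * (lam/mu) := by
      rw [← zpow_add_one₀ hρ0]; congr 1; ring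
    have e2 : ((1:ℝ)/(i:ℝ)) ^ (j - k (i-1))
        = ((1:ℝ)/(i:ℝ)) ^ (j - 1 - k (i-1)) * ((1:ℝ)/(i:ℝ)) := by
      rw [← zpow_add_one₀ hione]; congr 1; ring
    rw [hbj, hbj', e1, e2]
    field_simp
  · have hj : j = k (i-1) + 1 := by omega
    obtain ⟨i', rfl⟩ : ∃ i', i = i'+1 := ⟨i-1, by omega⟩
    simp only [Nat.add_sub_cancel] at hbj hj hj1 ⊢
    rcases Nat.eq_zero_or_pos i' with hz | hpos
    · subst hz
      have hjk : j - 1 = k 0 := by omega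
      have hek : j - k 0 = 1 := by omega
      rw [hjk, hβ.1, hbj, hek]
      have hX : Xcoef k 1 = 1 := by unfold Xcoef; simp
      rw [hX]
      norm_num
    · -- i' ≥ 1; previous point is top of block i'
      have hgap := hk.2.1 i' (by omega) (by omega)
      have hbprev := hβ.2 i' (by omega) (by omega) (k i') (by omega) le_rfl
      have hjk : j - 1 = k i' := by omega
      have hX : Xcoef k (i'+1) = Xcoef k i' * ((1:ℝ)/(i':ℝ)) ^ (k i' - k (i'-1)) :=
        Xcoef_succ hpos
      have hek : j - k 0 = (k i' - k 0) + 1 := by omega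
      have hez : j - k i' = 1 := by omega
      rw [hjk, hbprev, hbj, hX, hek, hez, zpow_add_one₀ hρ0, zpow_one]
      have hii : ((i':ℝ)+1) ≠ 0 := by positivity
      push_cast
      field_simp

end step

section more
variable {lam mu : ℝ} {N : ℕ} {S : ℤ} {k : ℕ → ℤ} {β : ℤ → ℝ}

lemma beta_pos (hlam : 0 < lam) (hmu : 0 < mu) (hk : IsPolicy N S k)
    (hβ : IsBeta lam mu N k β) :
    ∀ j : ℤ, k 0 ≤ j → j ≤ S → 0 < β j := by
  intro j h1 h2
  rcases eq_or_lt_of_le h1 with he | hlt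
  · rw [← he, hβ.1]; norm_num
  · obtain ⟨t, ht1, ht2, ht3, ht4⟩ :=
      policy_cover hk N le_rfl j hlt (by rw [hk.2.2]; exact h2)
    have hb := hβ.2 t ht1 ht2 j (by omega) ht4
    rw [hb]
    have hρ : (0:ℝ) < lam/mu := div_pos hlam hmu
    have ht0 : (0:ℝ) < (t:ℝ) := by exact_mod_cast Nat.lt_of_lt_of_le Nat.zero_lt_one ht1
    have := Xcoef_pos (k := k) t
    positivity

lemma step_bound (hlam : 0 < lam) (hmu : 0 < mu) (hk : IsPolicy N S k)
    (hβ : IsBeta lam mu N k β) :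
    ∀ j : ℤ, k 0 < j → j ≤ S → ∃ n : ℕ, 1 ≤ n ∧ j - (S - N) ≤ (n:ℤ) ∧
      (n:ℝ) * β j = (lam/mu) * β (j-1) := by
  intro j h1 h2
  obtain ⟨t, ht1, ht2, ht3, ht4⟩ :=
    policy_cover hk N le_rfl j h1 (by rw [hk.2.2]; exact h2)
  refine ⟨t, ht1, ?_, beta_step hlam hmu hk hβ t ht1 ht2 j ht3 ht4⟩
  have := policy_upper' hk ht2
  omega

lemma khathat_policy (hN : 1 ≤ N) (hS : (N:ℤ) ≤ S) : IsPolicy N S (khathat N S) := by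
  refine ⟨by simp [khathat]; omega, ?_, by simp [khathat]⟩
  intro i h1 h2
  simp only [khathat]
  omega

lemma khathat_step (hlam : 0 < lam) (hmu : 0 < mu) (hN : 1 ≤ N) (hS : (N:ℤ) ≤ S)
    (hβ : IsBeta lam mu N (khathat N S) β) :
    ∀ j : ℤ, S - N < j → j ≤ S →
      ((j - (S - (N:ℤ)) : ℤ) : ℝ) * β j = (lam/mu) * β (j-1) := by
  intro j h1 h2
  have hk := khathat_policy (S := S) hN hS
  have h0 : khathat N S 0 < j := by simp [khathat]; omega
  obtain ⟨t, ht1, ht2, ht3, ht4⟩ :=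
    policy_cover hk N le_rfl j h0 (by rw [hk.2.2]; exact h2)
  have hstep := beta_step hlam hmu hk hβ t ht1 ht2 j ht3 ht4
  have htj : (t:ℤ) = j - (S - N) := by
    simp only [khathat] at ht3 ht4
    omega
  have : ((j - (S - (N:ℤ)) : ℤ) : ℝ) = (t:ℝ) := by exact_mod_cast congrArg Int.cast htj.symm
  rw [this]
  exact hstep

lemma lr_ineq (hlam : 0 < lam) (hmu : 0 < mu) (hN : 1 ≤ N) (hS : (N:ℤ) ≤ S)
    (hk : IsPolicy N S k) (hβ : IsBeta lam mu N k β)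
    {βh : ℤ → ℝ} (hβh : IsBeta lam mu N (khathat N S) βh) :
    ∀ d : ℕ, ∀ m : ℤ, S - N ≤ m → m + d ≤ S →
      βh m * β (m + d) ≤ β m * βh (m + d) := by
  have hkh := khathat_policy (S := S) hN hS
  have hk0 : k 0 + (N:ℤ) ≤ S := by
    have := policy_mono hk N le_rfl; rw [hk.2.2] at this; exact this
  have hkh0 : khathat N S 0 = S - N := by simp [khathat]
  have hρ : (0:ℝ) < lam/mu := div_pos hlam hmu
  intro d
  induction d with
  | zero => intro m _ _; push_cast; rw [add_zero]; ring_nf; exact le_rfl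
  | succ d ih =>
    intro m hm hmd
    push_cast at hmd ⊢
    set j : ℤ := m + d + 1 with hj
    have hmd' : m + (d:ℤ) ≤ S := by omega
    have ihm := ih m hm (by push_cast; omega)
    push_cast at ihm
    obtain ⟨n, hn1, hnb, hrec⟩ := step_bound hlam hmu hk hβ j (by omega) (by omega)
    have hkhrec := khathat_step hlam hmu hN hS hβh j (by omega) (by omega)
    have hjm : j - 1 = m + d := by omega
    rw [hjm] at hrec hkhrec
    set c : ℝ := ((j - (S - (N:ℤ)) : ℤ) : ℝ) with hc
    have hc1 : (1:ℝ) ≤ c := by rw [hc]; exact_mod_cast (by omega : (1:ℤ) ≤ j - (S - N))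
    have hcn : c ≤ (n:ℝ) := by rw [hc]; exact_mod_cast hnb
    have hn0 : (0:ℝ) < (n:ℝ) := by exact_mod_cast Nat.lt_of_lt_of_le Nat.zero_lt_one hn1
    have hc0 : (0:ℝ) < c := by linarith
    have hβm : 0 < β m := beta_pos hlam hmu hk hβ m (by omega) (by omega)
    have hβhm : 0 < βh m := by
      have := beta_pos hlam hmu hkh hβh m (by rw [hkh0]; omega) (by omega)
      exact this
    have hβp : 0 < β (m + d) := beta_pos hlam hmu hk hβ _ (by omega) (by omega)
    have hβhp : 0 < βh (m + d) := beta_pos hlam hmu hkh hβh _ (by rw [hkh0]; omega) (by omega)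
    have key : c * (lam/mu) * (βh m * β (m + d)) ≤ (n:ℝ) * (lam/mu) * (β m * βh (m + d)) := by
      calc c * (lam/mu) * (βh m * β (m + d))
          ≤ c * (lam/mu) * (β m * βh (m + d)) := by
            apply mul_le_mul_of_nonneg_left ihm; positivity
        _ ≤ (n:ℝ) * (lam/mu) * (β m * βh (m + d)) := by
            apply mul_le_mul_of_nonneg_right _ (by positivity)
            apply mul_le_mul_of_nonneg_right hcn (le_of_lt hρ)
    have goal2 : (n:ℝ) * c * (βh m * β j) ≤ (n:ℝ) * c * (β m * βh j) := by
      have h1 : (n:ℝ) * c * (βh m * β j) = c * ((lam/mu) * (βh m * β (m+d))) := by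
        linear_combination c * βh m * hrec
      have h2 : (n:ℝ) * c * (β m * βh j) = (n:ℝ) * ((lam/mu) * (β m * βh (m+d))) := by
        linear_combination (n:ℝ) * β m * hkhrec
      rw [h1, h2]
      linarith [key]
    have := le_of_mul_le_mul_left goal2 (by positivity : (0:ℝ) < (n:ℝ) * c)
    have e : m + ((d:ℤ) + 1) = j := by rw [hj]; ring
    rw [e]; exact this

end more


section sums
variable {lam mu : ℝ} {N : ℕ} {S : ℤ} {k : ℕ → ℤ} {β : ℤ → ℝ}

lemma sum_blocks (hk : IsPolicy N S k) (g : ℤ → ℝ) :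
    ∑ i ∈ Icc 1 N, ∑ j ∈ Icc (k (i-1) + 1) (k i), g j = ∑ j ∈ Ioc (k 0) S, g j := by
  have key : ∀ n, n ≤ N →
      ∑ i ∈ Icc 1 n, ∑ j ∈ Ioc (k (i-1)) (k i), g j = ∑ j ∈ Ioc (k 0) (k n), g j := by
    intro n hn
    induction n with
    | zero => simp
    | succ m ih =>
      rw [Finset.sum_Icc_succ_top (by omega), ih (by omega)]
      have h1 : k 0 ≤ k m := by have := policy_mono hk m (by omega); omega
      have h2 : k m ≤ k (m+1) := by
        have := hk.2.1 (m+1) (by omega) hn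
        simp only [Nat.add_sub_cancel] at this; omega
      simpa using sum_Ioc_consec g h1 h2
  have e : ∀ (a b : ℤ), Icc (a+1) b = Ioc a b := by
    intro a b; ext x; simp
  calc ∑ i ∈ Icc 1 N, ∑ j ∈ Icc (k (i-1) + 1) (k i), g j
      = ∑ i ∈ Icc 1 N, ∑ j ∈ Ioc (k (i-1)) (k i), g j := by
        apply Finset.sum_congr rfl; intro i _; rw [e]
    _ = ∑ j ∈ Ioc (k 0) (k N), g j := key N le_rfl
    _ = ∑ j ∈ Ioc (k 0) S, g j := by rw [hk.2.2]

lemma sum_shift (f : ℤ → ℝ) (a b : ℤ) :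
    ∑ j ∈ Finset.Ioc a b, f (j-1) = ∑ m ∈ Finset.Icc a (b-1), f m := by
  have h : Finset.Ioc a b = (Finset.Icc a (b-1)).map (addRightEmbedding 1) := by
    rw [Finset.map_add_right_Icc]; ext x; simp
  rw [h, Finset.sum_map]
  apply Finset.sum_congr rfl
  intro x _
  simp

lemma Icc_split_top (f : ℤ → ℝ) {a b : ℤ} (h : a ≤ b) :
    ∑ m ∈ Finset.Icc a b, f m = (∑ m ∈ Finset.Icc a (b-1), f m) + f b := by
  have : Finset.Icc a b = insert b (Finset.Icc a (b-1)) := by ext x; simp; omega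
  rw [this, Finset.sum_insert (by simp)]
  ring

lemma Fval_eq (hlam : 0 < lam) (hmu : 0 < mu) (hN : 1 ≤ N)
    (hk : IsPolicy N S k) (hβ : IsBeta lam mu N k β) :
    Fval N S k β = (lam/mu) * (1 - Pfun S k β S) := by
  have hk0S : k 0 + (N:ℤ) ≤ S := by
    have := policy_mono hk N le_rfl; rw [hk.2.2] at this; exact this
  have hT : 0 < ∑ m ∈ Finset.Icc (k 0) S, β m := by
    apply Finset.sum_pos
    · intro m hm; simp only [Finset.mem_Icc] at hm
      exact beta_pos hlam hmu hk hβ m hm.1 hm.2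
    · exact ⟨k 0, by simp; omega⟩
  set T := ∑ m ∈ Finset.Icc (k 0) S, β m with hTdef
  have step1 : Fval N S k β
      = ∑ i ∈ Icc 1 N, ∑ j ∈ Icc (k (i-1) + 1) (k i), ((lam/mu) * β (j-1)) / T := by
    unfold Fval Pfun
    apply Finset.sum_congr rfl
    intro i hi
    simp only [Finset.mem_Icc] at hi
    apply Finset.sum_congr rfl
    intro j hj
    simp only [Finset.mem_Icc] at hj
    rw [← beta_step hlam hmu hk hβ i hi.1 hi.2 j (by omega) hj.2]
    ring
  rw [step1, sum_blocks hk (fun j => ((lam/mu) * β (j-1)) / T)]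
  have step2 : ∑ j ∈ Ioc (k 0) S, ((lam/mu) * β (j-1))/T
      = ((lam/mu)/T) * ∑ j ∈ Ioc (k 0) S, β (j-1) := by
    rw [Finset.mul_sum]; apply Finset.sum_congr rfl; intro j _; ring
  rw [step2, sum_shift]
  have hsplit := Icc_split_top β (show k 0 ≤ S by omega)
  rw [← hTdef] at hsplit
  have hsum : ∑ m ∈ Finset.Icc (k 0) (S-1), β m = T - β S := by linarith
  rw [hsum]
  unfold Pfun
  rw [← hTdef]
  field_simp

end sums

lemma cheb (A : Finset ℤ) (f g : ℤ → ℝ) (hf : ∀ m ∈ A, 0 ≤ f m)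
    (hg : ∀ m ∈ A, 0 ≤ g m)
    (h : ∀ m ∈ A, ∀ m' ∈ A, m < m' → g m * f m' ≤ f m * g m') :
    (∑ m ∈ A, (m:ℝ) * f m) * (∑ m ∈ A, g m) ≤ (∑ m ∈ A, (m:ℝ) * g m) * (∑ m ∈ A, f m) := by
  have expand : (∑ m ∈ A, (m:ℝ) * g m) * (∑ m ∈ A, f m) - (∑ m ∈ A, (m:ℝ) * f m) * (∑ m ∈ A, g m)
      = ∑ m ∈ A, ∑ m' ∈ A, (m:ℝ) * (g m * f m' - f m * g m') := by
    rw [Finset.sum_mul_sum, Finset.sum_mul_sum, ← Finset.sum_sub_distrib]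
    apply Finset.sum_congr rfl; intro m _
    rw [← Finset.sum_sub_distrib]
    apply Finset.sum_congr rfl; intro m' _
    ring
  have hswap : ∑ m ∈ A, ∑ m' ∈ A, (m:ℝ) * (g m * f m' - f m * g m')
      = ∑ m ∈ A, ∑ m' ∈ A, (m':ℝ) * (g m' * f m - f m' * g m) := Finset.sum_comm
  have h2D : (∑ m ∈ A, ∑ m' ∈ A, (m:ℝ) * (g m * f m' - f m * g m'))
      + ∑ m ∈ A, ∑ m' ∈ A, (m':ℝ) * (g m' * f m - f m' * g m)
      = ∑ m ∈ A, ∑ m' ∈ A, (((m:ℝ) - (m':ℝ)) * (g m * f m' - f m * g m')) := by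
    rw [← Finset.sum_add_distrib]
    apply Finset.sum_congr rfl; intro m _
    rw [← Finset.sum_add_distrib]
    apply Finset.sum_congr rfl; intro m' _
    ring
  have hpos : 0 ≤ ∑ m ∈ A, ∑ m' ∈ A, (((m:ℝ) - (m':ℝ)) * (g m * f m' - f m * g m')) := by
    apply Finset.sum_nonneg; intro m hm
    apply Finset.sum_nonneg; intro m' hm'
    rcases lt_trichotomy m m' with hlt | heq | hgt
    · have h1 : g m * f m' - f m * g m' ≤ 0 := by linarith [h m hm m' hm' hlt]
      have h2 : ((m:ℝ) - (m':ℝ)) ≤ 0 := by exact_mod_cast sub_nonpos.mpr (le_of_lt hlt)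
      nlinarith
    · subst heq; ring_nf; exact le_rfl
    · have h1 : 0 ≤ g m * f m' - f m * g m' := by linarith [h m' hm' m hm hgt]
      have h2 : (0:ℝ) ≤ ((m:ℝ) - (m':ℝ)) := by exact_mod_cast sub_nonneg.mpr (le_of_lt hgt)
      exact mul_nonneg h2 h1
  linarith


/-- `K̂̂` yields the largest expected waiting time and back-room staffing and
the smallest front-room staffing over all policies; in particular if
`B(K̂̂) < B_l` then no policy satisfies `B(K) ≥ B_l`. -/
theorem khathat_extremal
    (lam mu : ℝ) (hlam : 0 < lam) (hmu : 0 < mu)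
    (N : ℕ) (hN : 1 ≤ N) (S : ℤ) (hS : (N : ℤ) ≤ S)
    (βh : ℤ → ℝ) (hβh : IsBeta lam mu N (khathat N S) βh) (Bl : ℝ) :
    (∀ (k : ℕ → ℤ) (β : ℤ → ℝ), IsPolicy N S k → IsBeta lam mu N k β →
      Wq lam mu S k β ≤ Wq lam mu S (khathat N S) βh ∧
      Fval N S (khathat N S) βh ≤ Fval N S k β ∧
      Bval N S k β ≤ Bval N S (khathat N S) βh) ∧
    (Bval N S (khathat N S) βh < Bl →
      ∀ (k : ℕ → ℤ) (β : ℤ → ℝ), IsPolicy N S k → IsBeta lam mu N k β →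
        ¬ (Bl ≤ Bval N S k β)) := by
  have hkh := khathat_policy (S := S) hN hS
  have hkh0 : khathat N S 0 = S - (N:ℤ) := by simp [khathat]
  have hρ : (0:ℝ) < lam/mu := div_pos hlam hmu
  have main : ∀ (k : ℕ → ℤ) (β : ℤ → ℝ), IsPolicy N S k → IsBeta lam mu N k β →
      Wq lam mu S k β ≤ Wq lam mu S (khathat N S) βh ∧
      Fval N S (khathat N S) βh ≤ Fval N S k β ∧
      Bval N S k β ≤ Bval N S (khathat N S) βh := by
    intro k β hk hβ
    have hk0S : k 0 + (N:ℤ) ≤ S := by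
      have := policy_mono hk N le_rfl; rw [hk.2.2] at this; exact this
    have hk00 : 0 ≤ k 0 := hk.1
    have hβpos : ∀ m : ℤ, k 0 ≤ m → m ≤ S → 0 < β m := beta_pos hlam hmu hk hβ
    have hβhpos : ∀ m : ℤ, S - (N:ℤ) ≤ m → m ≤ S → 0 < βh m := by
      intro m h1 h2
      exact beta_pos hlam hmu hkh hβh m (by rw [hkh0]; exact h1) h2
    have hT : 0 < ∑ m ∈ Finset.Icc (k 0) S, β m := by
      apply Finset.sum_pos
      · intro m hm; simp only [Finset.mem_Icc] at hm; exact hβpos m hm.1 hm.2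
      · exact ⟨k 0, by simp; omega⟩
    have hTh : 0 < ∑ m ∈ Finset.Icc (S - (N:ℤ)) S, βh m := by
      apply Finset.sum_pos
      · intro m hm; simp only [Finset.mem_Icc] at hm; exact hβhpos m hm.1 hm.2
      · exact ⟨S, by simp only [Finset.mem_Icc]; omega⟩
    have hLR' : ∀ m m' : ℤ, S - (N:ℤ) ≤ m → m ≤ m' → m' ≤ S →
        βh m * β m' ≤ β m * βh m' := by
      intro m m' h1 h2 h3
      have h := lr_ineq hlam hmu hN hS hk hβ hβh (m' - m).toNat m h1 (by omega)
      have e : m + ((m' - m).toNat : ℤ) = m' := by omega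
      rwa [e] at h
    have hfil : (Finset.Icc (k 0) S).filter (fun m => S - (N:ℤ) ≤ m)
        = Finset.Icc (S - (N:ℤ)) S := by
      ext x; simp; omega
    -- cross inequality for P S
    have hcross : (∑ m ∈ Finset.Icc (S - (N:ℤ)) S, βh m) * β S
        ≤ (∑ m ∈ Finset.Icc (k 0) S, β m) * βh S := by
      calc (∑ m ∈ Finset.Icc (S - (N:ℤ)) S, βh m) * β S
          = ∑ m ∈ Finset.Icc (S - (N:ℤ)) S, βh m * β S := by rw [Finset.sum_mul]
        _ = ∑ m ∈ Finset.Icc (k 0) S, (if S - (N:ℤ) ≤ m then βh m * β S else 0) := by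
            rw [← hfil, Finset.sum_filter]
        _ ≤ ∑ m ∈ Finset.Icc (k 0) S, β m * βh S := by
            apply Finset.sum_le_sum
            intro m hm
            simp only [Finset.mem_Icc] at hm
            by_cases hc : S - (N:ℤ) ≤ m
            · rw [if_pos hc]
              exact hLR' m S hc hm.2 le_rfl
            · rw [if_neg hc]
              have := hβpos m hm.1 hm.2
              have := hβhpos S (by omega) le_rfl
              positivity
        _ = (∑ m ∈ Finset.Icc (k 0) S, β m) * βh S := by rw [Finset.sum_mul]
    -- P S comparison
    have hPk : Pfun S k β S = β S / ∑ m ∈ Finset.Icc (k 0) S, β m := rfl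
    have hPh : ∀ j, Pfun S (khathat N S) βh j
        = βh j / ∑ m ∈ Finset.Icc (S - (N:ℤ)) S, βh m := by
      intro j; unfold Pfun; rw [hkh0]
    have hP : Pfun S k β S ≤ Pfun S (khathat N S) βh S := by
      rw [hPk, hPh]
      rw [div_le_div_iff₀ hT hTh]
      linarith [hcross]
    -- P̂ S < 1
    have hPhlt1 : Pfun S (khathat N S) βh S < 1 := by
      rw [hPh]
      rw [div_lt_one hTh]
      have hsplit := Icc_split_top βh (show S - (N:ℤ) ≤ S by omega)
      have hrest : 0 < ∑ m ∈ Finset.Icc (S - (N:ℤ)) (S-1), βh m := by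
        apply Finset.sum_pos
        · intro m hm; simp only [Finset.mem_Icc] at hm; exact hβhpos m hm.1 (by omega)
        · exact ⟨S - 1, by simp only [Finset.mem_Icc]; omega⟩
      linarith
    -- F comparison
    have hFk : Fval N S k β = (lam/mu) * (1 - Pfun S k β S) :=
      Fval_eq hlam hmu hN hk hβ
    have hFh : Fval N S (khathat N S) βh = (lam/mu) * (1 - Pfun S (khathat N S) βh S) :=
      Fval_eq hlam hmu hN hkh hβh
    have hF : Fval N S (khathat N S) βh ≤ Fval N S k β := by
      rw [hFk, hFh]
      apply mul_le_mul_of_nonneg_left (by linarith [hP]) (le_of_lt hρ)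
    -- L comparison via Chebyshev
    have hch := cheb (Finset.Icc (k 0) S) β
      (fun m => if S - (N:ℤ) ≤ m then βh m else 0)
      (by intro m hm; simp only [Finset.mem_Icc] at hm; exact le_of_lt (hβpos m hm.1 hm.2))
      (by intro m hm; simp only [Finset.mem_Icc] at hm
          by_cases hc : S - (N:ℤ) ≤ m
          · rw [if_pos hc]; exact le_of_lt (hβhpos m hc hm.2)
          · rw [if_neg hc])
      (by intro m hm m' hm' hlt
          simp only [Finset.mem_Icc] at hm hm'
          by_cases hc : S - (N:ℤ) ≤ m
          · rw [if_pos hc, if_pos (by omega)]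
            exact hLR' m m' hc (le_of_lt hlt) hm'.2
          · rw [if_neg hc]
            have h1 := hβpos m hm.1 hm.2
            by_cases hc' : S - (N:ℤ) ≤ m'
            · rw [if_pos hc']
              have h2 := hβhpos m' hc' hm'.2
              nlinarith
            · rw [if_neg hc']; simp)
    have he1 : ∑ m ∈ Finset.Icc (k 0) S, (if S - (N:ℤ) ≤ m then βh m else 0)
        = ∑ m ∈ Finset.Icc (S - (N:ℤ)) S, βh m := by
      rw [← hfil, Finset.sum_filter]
    have he2 : ∑ m ∈ Finset.Icc (k 0) S, (m:ℝ) * (if S - (N:ℤ) ≤ m then βh m else 0)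
        = ∑ m ∈ Finset.Icc (S - (N:ℤ)) S, (m:ℝ) * βh m := by
      rw [← hfil, Finset.sum_filter]
      apply Finset.sum_congr rfl
      intro m _
      by_cases hc : S - (N:ℤ) ≤ m
      · rw [if_pos hc, if_pos hc]
      · rw [if_neg hc, if_neg hc, mul_zero]
    rw [he1, he2] at hch
    have hLk : Lval S k β
        = (∑ m ∈ Finset.Icc (k 0) S, (m:ℝ) * β m) / ∑ m ∈ Finset.Icc (k 0) S, β m := by
      unfold Lval Pfun
      rw [Finset.sum_div]
      apply Finset.sum_congr rfl
      intro m _; ring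
    have hLh : Lval S (khathat N S) βh
        = (∑ m ∈ Finset.Icc (S - (N:ℤ)) S, (m:ℝ) * βh m)
          / ∑ m ∈ Finset.Icc (S - (N:ℤ)) S, βh m := by
      unfold Lval Pfun
      rw [hkh0, Finset.sum_div]
      apply Finset.sum_congr rfl
      intro m _; ring
    have hL : Lval S k β ≤ Lval S (khathat N S) βh := by
      rw [hLk, hLh, div_le_div_iff₀ hT hTh]
      linarith [hch]
    have hLnn : 0 ≤ Lval S k β := by
      unfold Lval
      apply Finset.sum_nonneg
      intro m hm
      simp only [Finset.mem_Icc] at hm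
      have h1 := hβpos m hm.1 hm.2
      have h2 : (0:ℝ) ≤ (m:ℝ) := by exact_mod_cast (by omega : (0:ℤ) ≤ m)
      unfold Pfun
      positivity
    -- Wq comparison
    have hd1 : 0 < lam * (1 - Pfun S (khathat N S) βh S) := by
      apply mul_pos hlam; linarith
    have hd2 : lam * (1 - Pfun S (khathat N S) βh S) ≤ lam * (1 - Pfun S k β S) := by
      apply mul_le_mul_of_nonneg_left (by linarith) (le_of_lt hlam)
    have hWq : Wq lam mu S k β ≤ Wq lam mu S (khathat N S) βh := by
      unfold Wq
      have s1 : Lval S k β / (lam * (1 - Pfun S k β S))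
          ≤ Lval S k β / (lam * (1 - Pfun S (khathat N S) βh S)) :=
        div_le_div_of_nonneg_left hLnn hd1 hd2
      have s2 : Lval S k β / (lam * (1 - Pfun S (khathat N S) βh S))
          ≤ Lval S (khathat N S) βh / (lam * (1 - Pfun S (khathat N S) βh S)) := by
        exact (div_le_div_iff_of_pos_right hd1).mpr hL
      linarith
    exact ⟨hWq, hF, by unfold Bval; linarith⟩

  refine ⟨main, fun hB k β hk hβ hle => ?_⟩
  have := (main k β hk hβ).2.2
  linarith
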